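/- Let r = s² be a perfect square with s even, and a(n) = ⌊n/s + s/2⌋. Then for all n ≥ s², S(n) := ∑_{j=0}^{s²-1} a(n-j) = sn - s(s-2)/2, and a(S(n)) = n + 1. -/

import Mathlib

open Real Finset

/-- floor of real int division equals ediv, for positive denominator -/
lemma my_floor_div (n s : ℤ) (hs : 0 < s) : ⌊(n : ℝ) / (s : ℝ)⌋ = n / s := by
  have h1 : ((s.toNat : ℤ) : ℝ) = (s : ℝ) := by
    rw [Int.toNat_of_nonneg hs.le]
  have h2 : ⌊((n : ℚ) / (s.toNat : ℚ) : ℚ)⌋ = n / (s.toNat : ℤ) :=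
    Rat.floor_intCast_div_natCast n s.toNat
  have h3 : (((n : ℚ) / (s.toNat : ℚ) : ℚ) : ℝ) = (n : ℝ) / (s : ℝ) := by
    push_cast
    congr 1
  rw [← h3, Rat.floor_cast, h2, Int.toNat_of_nonneg hs.le]

/-- sum of m / t over m < k * t -/
lemma my_nat_sum (t k : ℕ) (ht : 0 < t) :
    ∑ m ∈ Finset.range (k * t), m / t = ∑ q ∈ Finset.range k, q * t := by
  induction k with
  | zero => simp
  | succ k ih =>
    rw [Nat.succ_mul, Finset.sum_range_add, ih, Finset.sum_range_succ]
    congr 1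
    have : ∀ i ∈ Finset.range t, (k * t + i) / t = k := by
      intro i hi
      rw [Finset.mem_range] at hi
      rw [Nat.mul_comm k t, Nat.mul_add_div ht, Nat.div_eq_of_lt hi, add_zero]
    rw [Finset.sum_congr rfl this, Finset.sum_const, Finset.card_range, smul_eq_mul,
      Nat.mul_comm]

lemma my_gauss (n : ℕ) : (∑ q ∈ Finset.range n, (q : ℤ)) * 2 = n * (n - 1) := by
  induction n with
  | zero => simp
  | succ k ih =>
    rw [Finset.sum_range_succ, add_mul, ih]
    push_cast
    ring

theorem stmt9 (s : ℤ) (hs2 : 2 ≤ s) (heven : Even s)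
    (a : ℤ → ℤ)
    (ha : ∀ n : ℤ, a n = ⌊(n : ℝ) / s + (s : ℝ) / 2⌋)
    (S : ℤ → ℤ)
    (hS : ∀ n : ℤ, S n = ∑ j ∈ Finset.range (s ^ 2).toNat, a (n - j)) :
    ∀ n : ℤ, s ^ 2 ≤ n →
      S n = s * n - s * (s - 2) / 2 ∧ a (S n) = n + 1 := by
  obtain ⟨t, ht⟩ := heven
  have hts : s = 2 * t := by omega
  have hspos : (0 : ℤ) < s := by omega
  have hsR : (0 : ℝ) < (s : ℝ) := by exact_mod_cast hspos
  -- a n = n / s + t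
  have ha' : ∀ n : ℤ, a n = n / s + t := by
    intro n
    rw [ha n]
    have h2 : (s : ℝ) / 2 = ((t : ℤ) : ℝ) := by
      rw [hts]; push_cast; ring
    rw [h2, Int.floor_add_intCast, my_floor_div n s hspos]
  -- step lemma : S (n+1) = S n + s
  have hstep : ∀ n : ℤ, S (n + 1) = S n + s := by
    intro n
    have key : S (n + 1) - S n = a (n + 1) - a (n + 1 - s ^ 2) := by
      rw [hS, hS, ← Finset.sum_sub_distrib]
      have : ∀ j ∈ Finset.range (s ^ 2).toNat,
          a (n + 1 - j) - a (n - j) =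
          (fun i : ℕ => a (n + 1 - i)) j - (fun i : ℕ => a (n + 1 - i)) (j + 1) := by
        intro j _
        show a (n + 1 - j) - a (n - j) = a (n + 1 - j) - a (n + 1 - (j + 1 : ℕ))
        congr 2
        push_cast
        ring
      rw [Finset.sum_congr rfl this, Finset.sum_range_sub']
      show a (n + 1 - ((0 : ℕ) : ℤ)) - a (n + 1 - (((s ^ 2).toNat : ℕ) : ℤ)) = _
      have h0 : (((s ^ 2).toNat : ℕ) : ℤ) = s ^ 2 := Int.toNat_of_nonneg (by positivity)
      rw [h0, Nat.cast_zero, sub_zero]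
    have hdiff : a (n + 1) - a (n + 1 - s ^ 2) = s := by
      rw [ha', ha']
      have : n + 1 - s ^ 2 = n + 1 + (-s) * s := by ring
      rw [this, Int.add_mul_ediv_right _ _ (ne_of_gt hspos)]
      ring
    omega
  -- value at s^2 - 1
  set c : ℤ := t * (s - 2) with hc
  have hbase : S (s ^ 2 - 1) = s * (s ^ 2 - 1) - c := by
    rw [hS]
    set N : ℕ := (s ^ 2).toNat with hN
    have hNs : (N : ℤ) = s ^ 2 := Int.toNat_of_nonneg (by positivity)
    have hre : ∀ j ∈ Finset.range N, a (s ^ 2 - 1 - (j : ℤ)) =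
        (fun m : ℕ => a m) (N - 1 - j) := by
      intro j hj
      rw [Finset.mem_range] at hj
      show a (s ^ 2 - 1 - (j : ℤ)) = a ((N - 1 - j : ℕ) : ℤ)
      congr 1
      have : ((N - 1 - j : ℕ) : ℤ) = (N : ℤ) - 1 - j := by omega
      rw [this, hNs]
    rw [Finset.sum_congr rfl hre, Finset.sum_range_reflect (fun m : ℕ => a m) N]
    have hval : ∀ m ∈ Finset.range N, (fun m : ℕ => a m) m =
        ((m / s.toNat : ℕ) : ℤ) + t := by
      intro m _
      show a ((m : ℕ) : ℤ) = _
      rw [ha']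
      congr 1
      rw [Int.natCast_div, Int.toNat_of_nonneg hspos.le]
    rw [Finset.sum_congr rfl hval, Finset.sum_add_distrib, Finset.sum_const,
      Finset.card_range]
    have hstn : (s.toNat : ℤ) = s := Int.toNat_of_nonneg hspos.le
    have hNtt : N = s.toNat * s.toNat := by
      have hh : ((s.toNat * s.toNat : ℕ) : ℤ) = (N : ℤ) := by
        push_cast
        rw [hstn, hNs, sq]
      exact (Nat.cast_inj.mp hh).symm
    have htpos : 0 < s.toNat := by omega
    rw [hNtt, ← Nat.cast_sum, my_nat_sum s.toNat s.toNat htpos]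
    have hpush : ((∑ q ∈ Finset.range s.toNat, q * s.toNat : ℕ) : ℤ)
        = (∑ q ∈ Finset.range s.toNat, (q : ℤ)) * s := by
      push_cast [hstn]
      rw [Finset.sum_mul]
    rw [hpush]
    set G : ℤ := ∑ q ∈ Finset.range s.toNat, (q : ℤ) with hG
    have hG2 : G * 2 = s * (s - 1) := by
      rw [hG, my_gauss, hstn]
    have hsmul : (s.toNat * s.toNat) • t = s * s * t := by
      rw [nsmul_eq_mul]
      push_cast
      rw [hstn]
    rw [hsmul, hc]
    linear_combination t * hG2 + (G - s ^ 2 + 1) * hts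
  -- formula for all n ≥ s^2 - 1 (in fact all n, by induction on d)
  have hformula : ∀ d : ℤ, S (s ^ 2 - 1 + d) = s * (s ^ 2 - 1 + d) - c := by
    intro d
    induction d using Int.induction_on with
    | zero => simpa using hbase
    | succ k ihk =>
      have : s ^ 2 - 1 + ((k : ℤ) + 1) = (s ^ 2 - 1 + k) + 1 := by ring
      rw [this, hstep]
      rw [ihk]; ring
    | pred k ihk =>
      have h1 : s ^ 2 - 1 + (-(k : ℤ) - 1) + 1 = s ^ 2 - 1 + (-(k : ℤ)) := by ring
      have h2 := hstep (s ^ 2 - 1 + (-(k : ℤ) - 1))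
      rw [h1, ihk] at h2
      have h3 : s * (s ^ 2 - 1 + (-(k : ℤ))) = s * (s ^ 2 - 1 + (-(k : ℤ) - 1)) + s := by
        ring
      omega
  intro n hn
  have hSn : S n = s * n - c := by
    have := hformula (n - (s ^ 2 - 1))
    have h : s ^ 2 - 1 + (n - (s ^ 2 - 1)) = n := by ring
    rw [h] at this
    rw [this]
  have hcdiv : s * (s - 2) / 2 = c := by
    rw [hc, hts]
    have : 2 * t * (2 * t - 2) = 2 * (t * (2 * t - 2)) := by ring
    rw [this, Int.mul_ediv_cancel_left _ (by norm_num)]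
  constructor
  · rw [hSn, hcdiv]
  · rw [ha', hSn]
    have hfact : s * n - c = s * (n - t + 1) := by
      rw [hc, hts]; ring
    rw [hfact, Int.mul_ediv_cancel_left _ (ne_of_gt hspos)]
    ring
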